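/- Let (X, S) be an aperiodic linearly recurrent subshift with constant K over a finite alphabet A. Then X is (K+1)-power free: if u is a word with u^{K+1} ∈ L(X) (where u^β denotes the prefix of length ⌊|u|β⌋ of uuu⋯), then u is the empty word. -/

import Mathlib

open Filter Set
open scoped ENNReal

variable {A : Type*}

/-- The two-sided shift on `A^ℤ`. -/
def shiftZ (x : ℤ → A) : ℤ → A := fun n => x (n + 1)

/-- The finite word `u` occurs in the sequence `x` at position `i`. -/
def OccursAt (u : List A) (x : ℤ → A) (i : ℤ) : Prop :=
  ∀ j : Fin u.length, x (i + (j : ℕ)) = u.get j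

/-- The finite word `u` occurs (somewhere) in the sequence `x`. -/
def OccursIn (u : List A) (x : ℤ → A) : Prop := ∃ i : ℤ, OccursAt u x i

/-- The language `L(X)` of a subshift `X` : all finite words occurring in some
element of `X`. -/
def lang (X : Set (ℤ → A)) : Set (List A) := {u | ∃ x ∈ X, OccursIn u x}

/-- The language `L(x)` of a sequence `x` : all finite words occurring in `x`. -/
def langSeq (x : ℤ → A) : Set (List A) := {u | OccursIn u x}

/-- The number of occurrences of `u` as a factor of the finite word `v`. -/
noncomputable def occCount (u v : List A) : ℕ :=
  {i : ℕ | u <+: v.drop i ∧ i + u.length ≤ v.length}.ncard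

/-- `w` is a return word to `u` (for the language `L`) : `wu ∈ L`, `u` is a prefix of
`wu` and `u` has exactly two occurrences in `wu`. -/
def IsReturnWord (L : Set (List A)) (u w : List A) : Prop :=
  (w ++ u) ∈ L ∧ u <+: (w ++ u) ∧ occCount u (w ++ u) = 2

/-- `x` is uniformly recurrent: every word of `L(x)` occurs in `x` with bounded
gaps. -/
def UniformlyRecurrent (x : ℤ → A) : Prop :=
  ∀ u ∈ langSeq x, ∃ N : ℕ, ∀ i : ℤ, ∃ j : ℤ, i ≤ j ∧ j < i + N ∧ OccursAt u x j

/-- `x` is linearly recurrent with constant `K` : it is uniformly recurrent and every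
return word `w` to a word `u ∈ L(x)` satisfies `|w| ≤ K⬝|u|`. -/
def LinearlyRecurrentSeq (K : ℝ) (x : ℤ → A) : Prop :=
  UniformlyRecurrent x ∧
    ∀ u ∈ langSeq x, ∀ w : List A,
      IsReturnWord (langSeq x) u w → (w.length : ℝ) ≤ K * u.length

/-- A subshift: a closed shift-invariant subset of `A^ℤ`. -/
def IsSubshift [TopologicalSpace A] (X : Set (ℤ → A)) : Prop :=
  IsClosed X ∧ shiftZ '' X = X

/-- A minimal subshift: a nonempty subshift with no nonempty proper closed
shift-invariant subset. -/
def IsMinimalSubshift [TopologicalSpace A] (X : Set (ℤ → A)) : Prop :=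
  IsSubshift X ∧ X.Nonempty ∧
    ∀ Y ⊆ X, IsClosed Y → shiftZ '' Y = Y → Y = ∅ ∨ Y = X

/-- A linearly recurrent (LR) subshift with constant `K` : a minimal subshift
containing a linearly recurrent sequence with constant `K`. -/
def IsLRSubshift [TopologicalSpace A] (K : ℝ) (X : Set (ℤ → A)) : Prop :=
  IsMinimalSubshift X ∧ ∃ x ∈ X, LinearlyRecurrentSeq K x

/-- The subshift `X` is aperiodic: it contains no periodic point. -/
def AperiodicSubshift (X : Set (ℤ → A)) : Prop :=
  ∀ x ∈ X, ∀ n : ℕ, 0 < n → shiftZ^[n] x ≠ x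

/-- The fractional power `u^β` : the prefix of length `⌊|u|⬝β⌋` of `uuu⋯`. -/
noncomputable def fracPow (u : List A) (β : ℝ) : List A :=
  (List.flatten (List.replicate (⌈β⌉₊ + 1) u)).take ⌊(u.length : ℝ) * β⌋₊

namespace Stmt9Aux

variable {A : Type*}

/-- The word of length `m` read in `x` starting at `i`. -/
def wordAt (x : ℤ → A) (i : ℤ) (m : ℕ) : List A := (List.range m).map fun j : ℕ => x (i + (j : ℤ))

@[simp] lemma wordAt_length (x : ℤ → A) (i : ℤ) (m : ℕ) : (wordAt x i m).length = m := by
  rw [wordAt, List.length_map, List.length_range]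

lemma wordAt_getElem (x : ℤ → A) (i : ℤ) (m : ℕ) (j : ℕ) (h : j < (wordAt x i m).length) :
    (wordAt x i m)[j] = x (i + j) := by
  simp only [wordAt, List.getElem_map, List.getElem_range]

lemma occursAt_iff_wordAt {u : List A} {x : ℤ → A} {i : ℤ} :
    OccursAt u x i ↔ wordAt x i u.length = u := by
  constructor
  · intro h
    apply List.ext_getElem (by simp)
    intro j h1 h2
    rw [wordAt_getElem]
    exact h ⟨j, h2⟩
  · intro h j
    have h2 := List.getElem_of_eq h (by simp : (j : ℕ) < (wordAt x i u.length).length)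
    rw [List.get_eq_getElem, ← h2, wordAt_getElem]

lemma occursAt_wordAt (x : ℤ → A) (i : ℤ) (m : ℕ) : OccursAt (wordAt x i m) x i := by
  rw [occursAt_iff_wordAt, wordAt_length]

lemma wordAt_mem_langSeq (x : ℤ → A) (i : ℤ) (m : ℕ) : wordAt x i m ∈ langSeq x :=
  ⟨i, occursAt_wordAt x i m⟩

lemma wordAt_add (x : ℤ → A) (i : ℤ) (a b : ℕ) :
    wordAt x i (a + b) = wordAt x i a ++ wordAt x (i + a) b := by
  apply List.ext_getElem (by simp)
  intro j h1 h2
  rw [wordAt_getElem, List.getElem_append]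
  split
  · rw [wordAt_getElem]
  · rw [wordAt_getElem]
    congr 1
    simp only [wordAt_length] at *
    push_cast [Nat.cast_sub (by omega : a ≤ j)]
    ring

lemma wordAt_prefix (x : ℤ → A) (i : ℤ) {a b : ℕ} (h : a ≤ b) :
    wordAt x i a <+: wordAt x i b := by
  refine ⟨wordAt x (i + a) (b - a), ?_⟩
  rw [← wordAt_add]
  congr 1
  omega

lemma wordAt_drop (x : ℤ → A) (i : ℤ) (m k : ℕ) (h : k ≤ m) :
    (wordAt x i m).drop k = wordAt x (i + k) (m - k) := by
  apply List.ext_getElem (by simp)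
  intro j h1 h2
  rw [List.getElem_drop, wordAt_getElem, wordAt_getElem]
  congr 1
  push_cast
  ring

lemma prefix_wordAt_iff {s : List A} {x : ℤ → A} {c : ℤ} {M : ℕ} :
    s <+: wordAt x c M ↔ (s.length ≤ M ∧ OccursAt s x c) := by
  constructor
  · rintro ⟨t, ht⟩
    have hlen : s.length ≤ M := by
      have := congrArg List.length ht
      simp at this; omega
    refine ⟨hlen, ?_⟩
    rw [occursAt_iff_wordAt]
    apply List.ext_getElem (by simp)
    intro j h1 h2
    rw [wordAt_getElem]
    have h3 := List.getElem_of_eq ht.symm (by simp; omega : j < (wordAt x c M).length)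
    rw [List.getElem_append_left h2] at h3
    rw [← h3, wordAt_getElem]
  · rintro ⟨h1, h2⟩
    rw [occursAt_iff_wordAt] at h2
    rw [← h2]
    exact wordAt_prefix x c h1

lemma prefix_mem_langSeq {x : ℤ → A} {v w : List A} (h : v <+: w) (hw : w ∈ langSeq x) :
    v ∈ langSeq x := by
  obtain ⟨i, hi⟩ := hw
  rw [occursAt_iff_wordAt] at hi
  refine ⟨i, ?_⟩
  rw [occursAt_iff_wordAt] at *
  obtain ⟨t, ht⟩ := h
  have hvl : v.length ≤ w.length := by
    have := congrArg List.length ht; simp at this; omega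
  apply List.ext_getElem (by simp)
  intro j h1 h2
  rw [wordAt_getElem]
  have h3 := List.getElem_of_eq hi (by simp; omega : j < (wordAt x i w.length).length)
  rw [wordAt_getElem] at h3
  have h4 := List.getElem_of_eq ht.symm (by omega : j < w.length)
  rw [List.getElem_append_left h2] at h4
  rw [← h4, ← h3]




/-- Shift by an arbitrary integer. -/
def shiftBy (m : ℤ) (x : ℤ → A) : ℤ → A := fun t => x (t + m)

@[simp] lemma shiftBy_zero (x : ℤ → A) : shiftBy 0 x = x := by
  funext t; simp [shiftBy]

lemma shiftBy_shiftBy (a b : ℤ) (x : ℤ → A) : shiftBy a (shiftBy b x) = shiftBy (a + b) x := by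
  funext t; simp [shiftBy]; ring_nf

lemma shiftZ_eq_shiftBy (x : ℤ → A) : shiftZ x = shiftBy 1 x := rfl

lemma shiftZ_iterate (k : ℕ) (x : ℤ → A) : shiftZ^[k] x = shiftBy k x := by
  induction k with
  | zero => simp
  | succ n ih =>
    rw [Function.iterate_succ_apply', ih, shiftZ_eq_shiftBy, shiftBy_shiftBy]
    congr 1
    push_cast; ring

lemma shiftBy_mem [TopologicalSpace A] {X : Set (ℤ → A)} (hX : IsSubshift X)
    {x : ℤ → A} (hx : x ∈ X) (m : ℤ) : shiftBy m x ∈ X := by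
  induction m using Int.induction_on with
  | zero => simpa using hx
  | succ k ih =>
    have : shiftBy (k + 1) x = shiftZ (shiftBy k x) := by
      rw [shiftZ_eq_shiftBy, shiftBy_shiftBy]; ring_nf
    rw [this, ← hX.2]
    exact ⟨_, ih, rfl⟩
  | pred k ih =>
    have h2 : shiftBy (-k : ℤ) x ∈ X := ih
    rw [← hX.2] at h2
    obtain ⟨y, hy, hyx⟩ := h2
    have h3 : shiftBy (-1) (shiftZ y) = y := by
      rw [shiftZ_eq_shiftBy, shiftBy_shiftBy]; simp
    have h4 : shiftBy (-(k:ℤ) - 1) x = shiftBy (-1) (shiftZ y) := by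
      rw [hyx, shiftBy_shiftBy]; congr 1; ring
    rw [h4, h3]; exact hy

/-- The shift as a homeomorphism. -/
def shiftHomeo [TopologicalSpace A] : (ℤ → A) ≃ₜ (ℤ → A) where
  toFun := shiftZ
  invFun := shiftBy (-1)
  left_inv := fun x => by rw [shiftZ_eq_shiftBy, shiftBy_shiftBy]; simp
  right_inv := fun x => by rw [shiftZ_eq_shiftBy, shiftBy_shiftBy]; simp
  continuous_toFun := continuous_pi fun n => continuous_apply (n + 1)
  continuous_invFun := continuous_pi fun n => continuous_apply (n + (-1))

lemma lang_subset_langSeq [TopologicalSpace A] [DiscreteTopology A] {X : Set (ℤ → A)}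
    (hmin : IsMinimalSubshift X) {x : ℤ → A} (hx : x ∈ X) : lang X ⊆ langSeq x := by
  obtain ⟨hX, hne, hminimal⟩ := hmin
  set Y : Set (ℤ → A) := closure (Set.range fun k : ℤ => shiftBy k x) with hY
  have hYsub : Y ⊆ X := by
    apply closure_minimal _ hX.1
    rintro _ ⟨k, rfl⟩
    exact shiftBy_mem hX hx k
  have hYclosed : IsClosed Y := isClosed_closure
  have hYinv : shiftZ '' Y = Y := by
    have h1 : shiftZ '' (Set.range fun k : ℤ => shiftBy k x) =
        (Set.range fun k : ℤ => shiftBy k x) := by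
      ext z
      constructor
      · rintro ⟨_, ⟨k, rfl⟩, rfl⟩
        exact ⟨k + 1, by rw [shiftZ_eq_shiftBy, shiftBy_shiftBy]; ring_nf⟩
      · rintro ⟨k, rfl⟩
        refine ⟨shiftBy (k - 1) x, ⟨k - 1, rfl⟩, ?_⟩
        rw [shiftZ_eq_shiftBy, shiftBy_shiftBy]; ring_nf
    calc shiftZ '' Y = (shiftHomeo : (ℤ → A) ≃ₜ (ℤ → A)) '' Y := rfl
      _ = closure ((shiftHomeo : (ℤ → A) ≃ₜ (ℤ → A)) '' (Set.range fun k : ℤ => shiftBy k x)) :=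
          shiftHomeo.image_closure _
      _ = Y := by rw [hY]; exact congrArg closure h1
  have hxY : x ∈ Y := subset_closure ⟨0, by simp⟩
  have hYX : Y = X := by
    rcases hminimal Y hYsub hYclosed hYinv with h | h
    · exact absurd (h ▸ hxY) (Set.notMem_empty x)
    · exact h
  rintro v ⟨y, hyX, i, hyocc⟩
  have hyY : y ∈ Y := hYX ▸ hyX
  set U : Set (ℤ → A) := ⋂ j : Fin v.length, {z | z (i + (j : ℕ)) = v.get j} with hU
  have hUopen : IsOpen U := by
    apply isOpen_iInter_of_finite
    intro j
    exact (continuous_apply (A := fun _ : ℤ => A) (i + ((j : ℕ) : ℤ))).isOpen_preimage _ (isOpen_discrete ({v.get j} : Set A))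
  have hyU : y ∈ U := by
    rw [hU]
    exact Set.mem_iInter.mpr fun j => hyocc j
  obtain ⟨z, hzU, hzr⟩ := mem_closure_iff.mp hyY U hUopen hyU
  obtain ⟨k, rfl⟩ := hzr
  refine ⟨i + k, fun j => ?_⟩
  have := Set.mem_iInter.mp hzU j
  simp only [Set.mem_setOf_eq, shiftBy] at this
  rw [← this]
  congr 1
  ring


section Gap

variable {x : ℤ → A} {K : ℝ}

/-- The word between consecutive occurrences is a return word; hence the gap is
bounded by `K * |s|`. -/
lemma gap_le (hx : LinearlyRecurrentSeq K x) {s : List A} (hs : s ∈ langSeq x)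
    {q q' : ℤ} (hq : OccursAt s x q) (hq' : OccursAt s x q') (hlt : q < q')
    (hcons : ∀ r : ℤ, q < r → r < q' → ¬ OccursAt s x r) :
    ((q' - q : ℤ) : ℝ) ≤ K * s.length := by
  set n := s.length with hn
  set d : ℕ := (q' - q).toNat with hd
  have hdq : (d : ℤ) = q' - q := Int.toNat_of_nonneg (by omega)
  set w : List A := wordAt x q d with hw
  have hws : w ++ s = wordAt x q (d + n) := by
    rw [wordAt_add]
    congr 1
    have : q + (d : ℤ) = q' := by omega
    rw [this, hn]
    exact (occursAt_iff_wordAt.mp hq').symm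
  have hd1 : 1 ≤ d := by omega
  have hret : IsReturnWord (langSeq x) s w := by
    refine ⟨?_, ?_, ?_⟩
    · rw [hws]; exact wordAt_mem_langSeq _ _ _
    · rw [hws]; exact prefix_wordAt_iff.mpr ⟨by omega, hq⟩
    · rw [occCount]
      have hset : {i : ℕ | s <+: (w ++ s).drop i ∧ i + s.length ≤ (w ++ s).length}
          = {0, d} := by
        ext i
        have hlen : (w ++ s).length = d + n := by rw [hws, wordAt_length]
        simp only [Set.mem_setOf_eq, Set.mem_insert_iff, Set.mem_singleton_iff]
        constructor
        · rintro ⟨hpre, hle⟩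
          rw [hlen] at hle
          have hi : i ≤ d := by omega
          rw [hws, wordAt_drop _ _ _ _ (by omega)] at hpre
          rw [prefix_wordAt_iff] at hpre
          by_contra hcon
          push_neg at hcon
          exact hcons (q + i) (by omega) (by omega) hpre.2
        · rintro (rfl | rfl)
          · refine ⟨?_, by rw [hlen]; try omega⟩
            rw [List.drop_zero, hws]
            exact prefix_wordAt_iff.mpr ⟨by omega, hq⟩
          · refine ⟨?_, by rw [hlen]; try omega⟩
            rw [hws, wordAt_drop _ _ _ _ (by omega)]
            have h1 : q + (d : ℤ) = q' := by omega
            rw [h1]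
            exact prefix_wordAt_iff.mpr ⟨by omega, hq'⟩
      rw [hset, Set.ncard_pair (by omega)]
  have hlr := hx.2 s hs w hret
  rw [hw, wordAt_length] at hlr
  have : ((q' - q : ℤ) : ℝ) = (d : ℝ) := by rw [← hdq]; push_cast; ring
  rw [this]
  exact hlr

/-- In any window of real length `K |s|` starting at `t`, the word `s` occurs. -/
lemma exists_occ_window (hx : LinearlyRecurrentSeq K x) {s : List A} (hs : s ∈ langSeq x)
    (t : ℤ) : ∃ j : ℤ, OccursAt s x j ∧ t ≤ j ∧ ((j - t : ℤ) : ℝ) ≤ K * s.length - 1 := by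
  obtain ⟨N, hN⟩ := hx.1 s hs
  have hbelow : ∃ z : ℤ, z < t ∧ OccursAt s x z := by
    obtain ⟨j, hj1, hj2, hj3⟩ := hN (t - N - 1)
    exact ⟨j, by omega, hj3⟩
  obtain ⟨q0, ⟨hq0lt, hq0occ⟩, hq0max⟩ :=
    Int.exists_greatest_of_bdd (P := fun z => z < t ∧ OccursAt s x z)
      ⟨t, fun z hz => by omega⟩ hbelow
  have habove : ∃ z : ℤ, q0 < z ∧ OccursAt s x z := by
    obtain ⟨j, hj1, hj2, hj3⟩ := hN t
    exact ⟨j, by omega, hj3⟩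
  obtain ⟨q1, ⟨hq1gt, hq1occ⟩, hq1min⟩ :=
    Int.exists_least_of_bdd (P := fun z => q0 < z ∧ OccursAt s x z)
      ⟨q0, fun z hz => by omega⟩ habove
  have hq1t : t ≤ q1 := by
    by_contra h
    push_neg at h
    have := hq0max q1 ⟨h, hq1occ⟩
    omega
  have hcons : ∀ r : ℤ, q0 < r → r < q1 → ¬ OccursAt s x r := by
    intro r h1 h2 hocc
    have := hq1min r ⟨h1, hocc⟩
    omega
  have hgap := gap_le hx hs hq0occ hq1occ (by omega) hcons
  refine ⟨q1, hq1occ, hq1t, ?_⟩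
  have h1 : ((q1 - t : ℤ) : ℝ) ≤ ((q1 - q0 : ℤ) : ℝ) - 1 := by
    have : (q1 - t : ℤ) ≤ (q1 - q0) - 1 := by omega
    calc ((q1 - t : ℤ) : ℝ) ≤ (((q1 - q0) - 1 : ℤ) : ℝ) := by exact_mod_cast this
      _ = ((q1 - q0 : ℤ) : ℝ) - 1 := by push_cast; ring
  linarith

end Gap

section Frac

variable {x : ℤ → A} {K : ℝ}

lemma flatten_replicate_length (u : List A) (c : ℕ) :
    (List.replicate c u).flatten.length = c * u.length := by
  induction c with
  | zero => simp
  | succ m ih =>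
    rw [List.replicate_succ, List.flatten_cons, List.length_append, ih]
    ring

lemma flatten_replicate_getElem (u : List A) (c j : ℕ)
    (h : j < (List.replicate c u).flatten.length) (h2 : j % u.length < u.length) :
    (List.replicate c u).flatten[j] = u[j % u.length] := by
  induction c generalizing j with
  | zero => rw [flatten_replicate_length] at h; omega
  | succ m ih =>
    have hsplit : (List.replicate (m + 1) u).flatten = u ++ (List.replicate m u).flatten := by
      rw [List.replicate_succ, List.flatten_cons]
    rw [List.getElem_of_eq hsplit h, List.getElem_append]
    split
    · next h' =>
      congr 1
      exact (Nat.mod_eq_of_lt h').symm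
    · next h' =>
      push_neg at h'
      have hj : j - u.length < (List.replicate m u).flatten.length := by
        rw [flatten_replicate_length] at h ⊢
        rw [Nat.succ_mul] at h
        omega
      rw [ih (j - u.length) hj (by rw [← Nat.mod_eq_sub_mod h']; exact h2)]
      congr 1
      rw [← Nat.mod_eq_sub_mod h']

lemma floor_le_aux (n : ℕ) (β : ℝ) : ⌊(n : ℝ) * β⌋₊ ≤ (⌈β⌉₊ + 1) * n := by
  rcases le_or_gt β 0 with hβ | hβ
  · have : (n : ℝ) * β ≤ 0 := mul_nonpos_of_nonneg_of_nonpos (by positivity) hβ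
    have h0 : ⌊(n : ℝ) * β⌋₊ = 0 := by
      rw [Nat.floor_eq_zero]
      linarith
    omega
  · have h1 : (n : ℝ) * β ≤ ((((⌈β⌉₊ + 1) * n : ℕ) : ℝ)) := by
      push_cast
      have h2 := Nat.le_ceil β
      have h3 : (0:ℝ) ≤ n := by positivity
      nlinarith
    calc ⌊(n : ℝ) * β⌋₊ ≤ ⌊((((⌈β⌉₊ + 1) * n : ℕ) : ℝ))⌋₊ := Nat.floor_le_floor h1
      _ = (⌈β⌉₊ + 1) * n := Nat.floor_natCast _

lemma fracPow_length (u : List A) (β : ℝ) :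
    (fracPow u β).length = ⌊(u.length : ℝ) * β⌋₊ := by
  rw [fracPow, List.length_take, flatten_replicate_length]
  exact min_eq_left (floor_le_aux u.length β)

lemma fracPow_getElem (u : List A) (β : ℝ) (j : ℕ)
    (h : j < (fracPow u β).length) (h2 : j % u.length < u.length) :
    (fracPow u β)[j] = u[j % u.length] := by
  have h3 : j < (List.flatten (List.replicate (⌈β⌉₊ + 1) u)).length := by
    rw [fracPow, List.length_take] at h
    omega
  simp only [fracPow, List.getElem_take]
  exact flatten_replicate_getElem u _ j h3 h2

/-- Every word of `L(x)` of length `|u|` is a rotation of `u`, provided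
`u^{K+1} ∈ L(x)`. -/
lemma factor_rotate (hx : LinearlyRecurrentSeq K x) {u : List A} (hn : 0 < u.length)
    (hu : fracPow u (K + 1) ∈ langSeq x) {s : List A} (hs : s ∈ langSeq x)
    (hlen : s.length = u.length) : ∃ r < u.length, s = u.rotate r := by
  set n := u.length with hnn
  obtain ⟨t, ht⟩ := hu
  obtain ⟨j, hjocc, hjt, hjb⟩ := exists_occ_window hx hs t
  set d : ℕ := (j - t).toNat with hdd
  have hd : (d : ℤ) = j - t := Int.toNat_of_nonneg (by omega)
  have hflen : (fracPow u (K + 1)).length = ⌊(n : ℝ) * (K + 1)⌋₊ := fracPow_length u _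
  have hKn : (d : ℝ) ≤ K * n - 1 := by
    rw [hlen] at hjb
    calc (d : ℝ) = ((d : ℤ) : ℝ) := by push_cast; ring
      _ = ((j - t : ℤ) : ℝ) := by rw [hd]
      _ ≤ K * n - 1 := hjb
  have hdn : d + n ≤ ⌊(n : ℝ) * (K + 1)⌋₊ := by
    apply Nat.le_floor
    push_cast
    nlinarith
  refine ⟨d % n, Nat.mod_lt _ hn, ?_⟩
  apply List.ext_getElem (by rw [List.length_rotate]; exact hlen)
  intro i h1 h2
  have hin : i < n := by rw [← hlen]; exact h1
  have e1 : s[i] = x (j + i) := by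
    have := hjocc ⟨i, h1⟩
    simp only [List.get_eq_getElem] at this
    exact this.symm
  have hdiflen : d + i < (fracPow u (K + 1)).length := by omega
  have e2 : (fracPow u (K + 1))[d + i]'hdiflen = x (t + ((d + i : ℕ) : ℤ)) := by
    have := ht ⟨d + i, by rw [hflen] at hdiflen ⊢; exact hdiflen⟩
    simp only [List.get_eq_getElem] at this
    exact this.symm
  have e3 : (fracPow u (K + 1))[d + i]'hdiflen = u[(d + i) % n]'(Nat.mod_lt _ hn) :=
    fracPow_getElem u _ _ _ (Nat.mod_lt _ hn)
  have e4 : x (j + i) = x (t + ((d + i : ℕ) : ℤ)) := by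
    congr 1
    push_cast
    omega
  rw [e1, e4, ← e2, e3, List.getElem_rotate]
  congr 1
  show (d + i) % n = (i + d % n) % u.length
  rw [← hnn, Nat.add_comm i (d % n), Nat.mod_add_mod, Nat.add_comm d i]

end Frac

section MH

variable [Fintype A] {x : ℤ → A} {K : ℝ}

/-- The set of words of length `m` in the language of `x`. -/
def Lm (x : ℤ → A) (m : ℕ) : Set (List A) := {w | w ∈ langSeq x ∧ w.length = m}

lemma Lm_finite (x : ℤ → A) (m : ℕ) : (Lm x m).Finite :=
  Set.Finite.subset (List.finite_length_eq A m) fun _ hw => hw.2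

lemma wordAt_mem_Lm (x : ℤ → A) (i : ℤ) (m : ℕ) : wordAt x i m ∈ Lm x m :=
  ⟨wordAt_mem_langSeq x i m, wordAt_length x i m⟩

lemma wordAt_take (x : ℤ → A) (i : ℤ) {a b : ℕ} (h : a ≤ b) :
    (wordAt x i b).take a = wordAt x i a := by
  apply List.ext_getElem (by simp; omega)
  intro t h1 h2
  rw [List.getElem_take, wordAt_getElem, wordAt_getElem]

lemma Lm_take {w : List A} {m : ℕ} (hw : w ∈ Lm x (m + 1)) : w.take m ∈ Lm x m := by
  refine ⟨prefix_mem_langSeq (List.take_prefix m w) hw.1, ?_⟩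
  rw [List.length_take, hw.2]
  omega

lemma Lm_subset_take_image (x : ℤ → A) (m : ℕ) :
    Lm x m ⊆ (fun w : List A => w.take m) '' Lm x (m + 1) := by
  rintro w ⟨⟨i, hocc⟩, hlen⟩
  rw [occursAt_iff_wordAt, hlen] at hocc
  refine ⟨wordAt x i (m + 1), wordAt_mem_Lm x i (m + 1), ?_⟩
  show (wordAt x i (m + 1)).take m = w
  rw [wordAt_take x i (by omega), hocc]

lemma ncard_Lm_mono (x : ℤ → A) (m : ℕ) : (Lm x m).ncard ≤ (Lm x (m + 1)).ncard :=
  le_trans (Set.ncard_le_ncard (Lm_subset_take_image x m) ((Lm_finite x (m+1)).image _))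
    (Set.ncard_image_le (Lm_finite x (m + 1)))

lemma ncard_Lm_zero (x : ℤ → A) : (Lm x 0).ncard = 1 := by
  have : Lm x 0 = {([] : List A)} := by
    ext w
    constructor
    · rintro ⟨_, hlen⟩
      exact List.length_eq_zero_iff.mp hlen
    · rintro rfl
      exact ⟨⟨0, fun j => j.elim0⟩, rfl⟩
  rw [this, Set.ncard_singleton]

lemma exists_eq_level {n : ℕ} (hcard : (Lm x n).ncard ≤ n) :
    ∃ m < n, (Lm x (m + 1)).ncard ≤ (Lm x m).ncard := by
  by_contra h
  push_neg at h
  have key : ∀ k ≤ n, k + 1 ≤ (Lm x k).ncard := by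
    intro k
    induction k with
    | zero => intro _; rw [ncard_Lm_zero]
    | succ k ih =>
      intro hk
      have h1 := ih (by omega)
      have h2 := h k (by omega)
      omega
  have := key n le_rfl
  omega

lemma unique_ext {m : ℕ} (hlev : (Lm x (m + 1)).ncard ≤ (Lm x m).ncard) :
    ∀ w : List A, w.length = m → ∀ a b : A,
      w ++ [a] ∈ langSeq x → w ++ [b] ∈ langSeq x → a = b := by
  intro w hwlen a b ha hb
  by_contra hab
  have hwa : w ++ [a] ∈ Lm x (m + 1) := ⟨ha, by simp [hwlen]⟩
  have hwb : w ++ [b] ∈ Lm x (m + 1) := ⟨hb, by simp [hwlen]⟩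
  have hne : w ++ [a] ≠ w ++ [b] := by
    intro hcon
    exact hab (by simpa using hcon)
  have htake : ∀ c : A, (w ++ [c]).take m = w := by
    intro c
    rw [← hwlen, List.take_left]
  have hsub : Lm x m ⊆ (fun v : List A => v.take m) '' (Lm x (m + 1) \ {w ++ [b]}) := by
    intro v hv
    obtain ⟨v', hv', hvv⟩ := Lm_subset_take_image x m hv
    rcases eq_or_ne v' (w ++ [b]) with rfl | hvne
    · refine ⟨w ++ [a], ⟨hwa, by simpa using hne⟩, ?_⟩
      have hvv' : (w ++ [b]).take m = v := hvv
      rw [htake b] at hvv'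
      show (w ++ [a]).take m = v
      rw [htake a]
      exact hvv' 
    · exact ⟨v', ⟨hv', hvne⟩, hvv⟩
  have hfin : (Lm x (m + 1)).Finite := Lm_finite x (m + 1)
  have h1 : (Lm x m).ncard ≤ (Lm x (m + 1) \ {w ++ [b]}).ncard :=
    le_trans (Set.ncard_le_ncard hsub ((hfin.diff).image _))
      (Set.ncard_image_le (hfin.diff))
  have h2 : (Lm x (m + 1) \ {w ++ [b]}).ncard < (Lm x (m + 1)).ncard :=
    Set.ncard_diff_singleton_lt_of_mem hwb hfin
  omega

end MH

section Periodic

variable [TopologicalSpace A] [Fintype A] {X : Set (ℤ → A)} {x : ℤ → A}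

lemma wordAt_succ (x : ℤ → A) (c : ℤ) (m : ℕ) :
    wordAt x c (m + 1) = wordAt x c m ++ [x (c + m)] := by
  rw [wordAt_add]
  congr 1
  apply List.ext_getElem (by simp)
  intro j h1 h2
  simp only [wordAt_length] at h1
  interval_cases j
  · rw [wordAt_getElem]
    simp

lemma exists_periodic (hX : IsSubshift X) (hx : x ∈ X) {m : ℕ}
    (huniq : ∀ w : List A, w.length = m → ∀ a b : A,
      w ++ [a] ∈ langSeq x → w ++ [b] ∈ langSeq x → a = b) :
    ∃ y ∈ X, ∃ p : ℕ, 0 < p ∧ shiftZ^[p] y = y := by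
  classical
  -- a step: equal blocks propagate to the right
  have step : ∀ c c' : ℤ, wordAt x c m = wordAt x c' m →
      x (c + m) = x (c' + m) ∧ wordAt x (c + 1) m = wordAt x (c' + 1) m := by
    intro c c' hcc
    have ha : wordAt x c (m + 1) = wordAt x c m ++ [x (c + m)] := wordAt_succ x c m
    have hb : wordAt x c' (m + 1) = wordAt x c' m ++ [x (c' + m)] := wordAt_succ x c' m
    have hlet : x (c + m) = x (c' + m) := by
      apply huniq (wordAt x c m) (wordAt_length x c m)
      · rw [← ha]; exact wordAt_mem_langSeq x c (m + 1)
      · rw [hcc, ← hb]; exact wordAt_mem_langSeq x c' (m + 1)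
    refine ⟨hlet, ?_⟩
    apply List.ext_getElem (by simp)
    intro j h1 h2
    rw [wordAt_getElem, wordAt_getElem]
    simp only [wordAt_length] at h1
    rcases lt_or_eq_of_le (Nat.succ_le_of_lt h1) with hj | hj
    · have e := List.getElem_of_eq hcc (by simp; omega : j + 1 < (wordAt x c m).length)
      rw [wordAt_getElem, wordAt_getElem] at e
      have e1 : c + 1 + (j : ℤ) = c + ((j : ℕ) + 1 : ℕ) := by push_cast; ring
      have e2 : c' + 1 + (j : ℤ) = c' + ((j : ℕ) + 1 : ℕ) := by push_cast; ring
      rw [e1, e2]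
      exact_mod_cast e
    · have e1 : c + 1 + (j : ℤ) = c + (m : ℤ) := by
        have : (j : ℤ) + 1 = (m : ℤ) := by exact_mod_cast hj
        omega
      have e2 : c' + 1 + (j : ℤ) = c' + (m : ℤ) := by
        have : (j : ℤ) + 1 = (m : ℤ) := by exact_mod_cast hj
        omega
      rw [e1, e2]
      exact hlet
  -- pigeonhole on blocks at nonnegative positions
  obtain ⟨i, j, hij, hB⟩ :=
    Finite.exists_ne_map_eq_of_infinite (fun k : ℕ => (fun t : Fin m => x ((k : ℤ) + t)))
  -- wlog i < j
  wlog hlt : i < j generalizing i j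
  · exact this j i (Ne.symm hij) (hB.symm) (by omega)
  have hblock : wordAt x (i : ℤ) m = wordAt x (j : ℤ) m := by
    apply List.ext_getElem (by simp)
    intro t h1 h2
    rw [wordAt_getElem, wordAt_getElem]
    have := congrFun hB ⟨t, by simpa using h1⟩
    exact this
  -- propagation
  have prop : ∀ t : ℕ, wordAt x ((i : ℤ) + t) m = wordAt x ((j : ℤ) + t) m := by
    intro t
    induction t with
    | zero => simpa using hblock
    | succ t ih =>
      have := (step _ _ ih).2
      have e1 : (i : ℤ) + t + 1 = (i : ℤ) + ((t : ℕ) + 1 : ℕ) := by push_cast; ring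
      have e2 : (j : ℤ) + t + 1 = (j : ℤ) + ((t : ℕ) + 1 : ℕ) := by push_cast; ring
      rwa [e1, e2] at this
  have hletter : ∀ t : ℕ, x ((i : ℤ) + m + t) = x ((j : ℤ) + m + t) := by
    intro t
    have := (step _ _ (prop t)).1
    have e1 : (i : ℤ) + t + m = (i : ℤ) + m + t := by ring
    have e2 : (j : ℤ) + t + m = (j : ℤ) + m + t := by ring
    rwa [e1, e2] at this
  -- the period and base point
  set p : ℕ := j - i with hp
  have hppos : 0 < p := by omega
  set c : ℤ := (i : ℤ) + m with hc
  have hper : ∀ s : ℕ, x (c + s) = x (c + p + s) := by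
    intro s
    have := hletter s
    have e : (j : ℤ) + m + s = c + p + s := by
      rw [hc, hp]
      push_cast [Nat.cast_sub (le_of_lt hlt)]
      ring
    rwa [e] at this
  have hmod : ∀ s : ℕ, x (c + s) = x (c + ((s % p : ℕ) : ℤ)) := by
    intro s
    induction s using Nat.strong_induction_on with
    | _ s ih =>
      rcases lt_or_ge s p with hs | hs
      · rw [Nat.mod_eq_of_lt hs]
      · have h1 : x (c + ((s - p : ℕ) : ℤ)) = x (c + p + ((s - p : ℕ) : ℤ)) := hper (s - p)
        have e : c + (p : ℤ) + ((s - p : ℕ) : ℤ) = c + s := by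
          push_cast [Nat.cast_sub hs]
          ring
        rw [e] at h1
        rw [← h1, ih (s - p) (by omega), Nat.mod_eq_sub_mod hs]
  set y : ℤ → A := fun t => x (c + (t % (p : ℤ))) with hy
  have hyper : shiftZ^[p] y = y := by
    rw [shiftZ_iterate]
    funext t
    show x (c + (t + (p : ℤ)) % (p : ℤ)) = x (c + t % (p : ℤ))
    have e : (t + (p : ℤ)) % (p : ℤ) = t % (p : ℤ) := by
      have := Int.add_mul_emod_self_left t (p : ℤ) 1
      simpa using this
    rw [e]
  have hmodZ : ∀ s : ℤ, 0 ≤ s → x (c + s) = x (c + (s % (p : ℤ))) := by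
    intro s hs
    have h1 : s = ((s.toNat : ℕ) : ℤ) := (Int.toNat_of_nonneg hs).symm
    rw [h1, hmod s.toNat]
    norm_cast
  -- y is the limit of shifts of x
  have htend : Filter.Tendsto (fun k : ℕ => shiftBy (c + k * p) x) Filter.atTop (nhds y) := by
    rw [tendsto_pi_nhds]
    intro t
    apply Filter.Tendsto.congr' _ tendsto_const_nhds
    rw [Filter.eventuallyEq_iff_exists_mem]
    refine ⟨{k : ℕ | 0 ≤ t + (k : ℤ) * p}, ?_, ?_⟩
    · rw [Filter.mem_atTop_sets]
      refine ⟨(-t).toNat, fun k hk => ?_⟩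
      simp only [Set.mem_setOf_eq]
      have h1 : (-t : ℤ) ≤ ((-t).toNat : ℤ) := Int.self_le_toNat (-t)
      have h2 : (((-t).toNat : ℕ) : ℤ) ≤ (k : ℤ) := by exact_mod_cast hk
      have h3 : (k : ℤ) ≤ (k : ℤ) * (p : ℤ) :=
        le_mul_of_one_le_right (by positivity) (by exact_mod_cast hppos)
      linarith
    · intro k hk
      simp only [Set.mem_setOf_eq] at hk
      show y t = shiftBy (c + k * p) x t
      rw [hy]
      simp only [shiftBy]
      have e : t + (c + (k : ℤ) * p) = c + (t + (k : ℤ) * p) := by ring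
      rw [e, hmodZ _ hk]
      congr 2
      rw [Int.add_mul_emod_self_right]
  have hyX : y ∈ X := by
    refine hX.1.mem_of_tendsto htend (Filter.Eventually.of_forall fun k => ?_)
    exact shiftBy_mem hX hx _
  exact ⟨y, hyX, p, hppos, hyper⟩

end Periodic

end Stmt9Aux

/-- An aperiodic linearly recurrent subshift with constant `K` is
`(K+1)`-power free: the only word `u` with `u^{K+1} ∈ L(X)` is the empty word. -/
theorem stmt9 {A : Type*} [Fintype A] [TopologicalSpace A] [DiscreteTopology A]
    (X : Set (ℤ → A)) (K : ℝ)
    (hLR : IsLRSubshift K X) (hap : AperiodicSubshift X) :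
    ∀ u : List A, fracPow u (K + 1) ∈ lang X → u = [] := by
  classical
  intro u hu
  by_contra hne
  obtain ⟨hmin, x, hxX, hxLR⟩ := hLR
  have hn : 0 < u.length := List.length_pos_iff.mpr hne
  have hu' : fracPow u (K + 1) ∈ langSeq x := Stmt9Aux.lang_subset_langSeq hmin hxX hu
  have hcard : (Stmt9Aux.Lm x u.length).ncard ≤ u.length := by
    have hsub : Stmt9Aux.Lm x u.length ⊆
        ↑((Finset.range u.length).image fun r => u.rotate r) := by
      intro s hs
      obtain ⟨r, hr, rfl⟩ := Stmt9Aux.factor_rotate hxLR hn hu' hs.1 hs.2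
      simp only [Finset.coe_image, Finset.coe_range, Set.mem_image, Set.mem_Iio]
      exact ⟨r, hr, rfl⟩
    calc (Stmt9Aux.Lm x u.length).ncard
        ≤ (((Finset.range u.length).image fun r => u.rotate r) : Finset (List A)).card := by
          rw [← Set.ncard_coe_finset]
          exact Set.ncard_le_ncard hsub (Finset.finite_toSet _)
      _ ≤ u.length := le_trans Finset.card_image_le (by simp)
  obtain ⟨m, hm, hlev⟩ := Stmt9Aux.exists_eq_level hcard
  have huniq := Stmt9Aux.unique_ext hlev
  obtain ⟨y, hyX, p, hp, hper⟩ := Stmt9Aux.exists_periodic hmin.1 hxX huniq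
  exact hap y hyX p hp hper
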